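/- Let P : [0,T] → L(X₁,X₂) be strongly continuous, and let Ψ⃖_{t,s} be the forward evolution family in L(X₁) solving Ψ⃖_{t,s} = U⃖_{t,s} − ∫_s^t Ψ⃖_{t,r} B(r) P(r) U⃖_{r,s} dr. Then P solves the backward Riccati integral equation P(t) = U⃗_{t,T} G U⃖_{T,t} + ∫_t^T U⃗_{t,r}{C(r) − P(r)B(r)P(r)} U⃖_{r,t} dr if and only if P(t) = U⃗_{t,T} G Ψ⃖_{T,t} + ∫_t^T U⃗_{t,r} C(r) Ψ⃖_{r,t} dr for each t ∈ [0,T]. -/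

import Mathlib

open MeasureTheory intervalIntegral

open Set Filter Function


section aux
variable {X Y : Type*} [NormedAddCommGroup X] [NormedSpace ℝ X]
  [NormedAddCommGroup Y] [NormedSpace ℝ Y]

/-- composition of a uniformly bounded strongly continuous operator family with a
continuous vector function is continuous. -/
lemma aux_strong_comp {α : Type*} [TopologicalSpace α]
    {F : α → X →L[ℝ] Y} {v : α → X} {s : Set α} {M : ℝ}
    (hb : ∀ a ∈ s, ‖F a‖ ≤ M)
    (hF : ∀ x : X, ContinuousOn (fun a => F a x) s)
    (hv : ContinuousOn v s) :
    ContinuousOn (fun a => F a (v a)) s := by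
  intro a₀ ha₀
  have h0 : Tendsto (fun a => M * ‖v a - v a₀‖ + ‖F a (v a₀) - F a₀ (v a₀)‖)
      (nhdsWithin a₀ s) (nhds 0) := by
    have h1 : Tendsto (fun a => ‖v a - v a₀‖) (nhdsWithin a₀ s) (nhds 0) := by
      have := (hv a₀ ha₀)
      rw [ContinuousWithinAt, tendsto_iff_norm_sub_tendsto_zero] at this
      exact this
    have h2 : Tendsto (fun a => ‖F a (v a₀) - F a₀ (v a₀)‖) (nhdsWithin a₀ s) (nhds 0) := by
      have := (hF (v a₀) a₀ ha₀)
      rw [ContinuousWithinAt, tendsto_iff_norm_sub_tendsto_zero] at this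
      exact this
    have := ((h1.const_mul M).add h2)
    simpa using this
  have hev : ∀ᶠ a in nhdsWithin a₀ s,
      ‖F a (v a) - F a₀ (v a₀)‖ ≤ M * ‖v a - v a₀‖ + ‖F a (v a₀) - F a₀ (v a₀)‖ := by
    filter_upwards [self_mem_nhdsWithin] with a ha
    calc ‖F a (v a) - F a₀ (v a₀)‖
        ≤ ‖F a (v a) - F a (v a₀)‖ + ‖F a (v a₀) - F a₀ (v a₀)‖ := norm_sub_le_norm_sub_add_norm_sub _ _ _
      _ ≤ M * ‖v a - v a₀‖ + ‖F a (v a₀) - F a₀ (v a₀)‖ := by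
          gcongr
          calc ‖F a (v a) - F a (v a₀)‖ = ‖F a (v a - v a₀)‖ := by rw [map_sub]
            _ ≤ ‖F a‖ * ‖v a - v a₀‖ := (F a).le_opNorm _
            _ ≤ M * ‖v a - v a₀‖ := by gcongr; exact (norm_nonneg _).trans ((F a).le_opNorm ((v a) - v a₀) |>.trans (le_of_eq rfl)) |> fun _ => hb a ha
  rw [ContinuousWithinAt, tendsto_iff_norm_sub_tendsto_zero]
  exact squeeze_zero_norm' (by simpa using hev) h0

/-- Banach–Steinhaus on a compact interval. -/
lemma aux_bs [CompleteSpace X] {T : ℝ} {F : ℝ → X →L[ℝ] Y}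
    (hF : ∀ x : X, ContinuousOn (fun t => F t x) (Icc 0 T)) :
    ∃ M : ℝ, 0 ≤ M ∧ ∀ t ∈ Icc (0:ℝ) T, ‖F t‖ ≤ M := by
  have h : ∀ x : X, ∃ Cx : ℝ, ∀ i : ↥(Icc (0:ℝ) T), ‖F i x‖ ≤ Cx := by
    intro x
    obtain ⟨Cx, hCx⟩ := isCompact_Icc.exists_bound_of_continuousOn (hF x)
    exact ⟨Cx, fun i => hCx i i.2⟩
  obtain ⟨C', hC'⟩ := banach_steinhaus (g := fun i : ↥(Icc (0:ℝ) T) => F i) h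
  exact ⟨max C' 0, le_max_right _ _, fun t ht => (hC' ⟨t, ht⟩).trans (le_max_left _ _)⟩

end aux


lemma aux_triangle_swap {Y : Type*} [NormedAddCommGroup Y] [NormedSpace ℝ Y] [CompleteSpace Y]
    {t T : ℝ} (htT : t ≤ T) {f : ℝ → ℝ → Y} {Mf : ℝ}
    (hcont : ∀ σ : ℝ, Continuous fun r => f r σ)
    (hmeas : ∀ r : ℝ, StronglyMeasurable (f r))
    (hbdd : ∀ r σ : ℝ, ‖f r σ‖ ≤ Mf) :
    ((∫ r in t..T, ∫ σ in t..r, f r σ) = ∫ σ in t..T, ∫ r in σ..T, f r σ) ∧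
      IntegrableOn (fun σ => ∫ r in σ..T, f r σ) (Ioc t T) := by
  set μ : Measure ℝ := volume.restrict (Ioc t T) with hμ
  haveI : Fact ((volume : Measure ℝ) (Ioc t T) < ⊤) := ⟨measure_Ioc_lt_top⟩
  set H : ℝ → ℝ → Y := fun r σ => if σ ≤ r then f r σ else 0 with hH
  -- measurability and integrability of H on the product
  have hum : StronglyMeasurable (uncurry f) :=
    stronglyMeasurable_uncurry_of_continuous_of_stronglyMeasurable hcont hmeas
  have hsm : StronglyMeasurable (uncurry H) := by
    have : uncurry H = fun p : ℝ × ℝ => ({p : ℝ × ℝ | p.2 ≤ p.1}.indicator (uncurry f)) p := by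
      funext p
      simp only [uncurry, Set.indicator_apply, Set.mem_setOf_eq, hH]
    rw [this]
    exact hum.indicator (isClosed_le continuous_snd continuous_fst).measurableSet
  have hint : Integrable (uncurry H) (μ.prod μ) := by
    refine ⟨hsm.aestronglyMeasurable, HasFiniteIntegral.of_bounded (C := Mf) ?_⟩
    refine ae_of_all _ fun p => ?_
    by_cases h : p.2 ≤ p.1
    · simpa [uncurry, hH, h] using hbdd p.1 p.2
    · have h0 := (norm_nonneg (f p.1 p.2)).trans (hbdd p.1 p.2)
      simp [uncurry, hH, h, h0]
  -- left side
  have hleft : (∫ r in t..T, ∫ σ in t..r, f r σ) = ∫ r, (∫ σ, H r σ ∂μ) ∂μ := by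
    rw [intervalIntegral.integral_of_le htT, ← hμ]
    refine setIntegral_congr_fun measurableSet_Ioc fun r hr => ?_
    have h1 : ∀ σ : ℝ, H r σ = (Iic r).indicator (f r) σ := fun σ => by
      simp [hH, Set.indicator_apply, Set.mem_Iic]
    calc (∫ σ in t..r, f r σ) = ∫ σ in Ioc t r, f r σ :=
          intervalIntegral.integral_of_le hr.1.le
      _ = ∫ σ, (Iic r).indicator (f r) σ ∂μ := by
          have hset : Iic r ∩ Ioc t T = Ioc t r := by
            ext σ
            simp only [Set.mem_inter_iff, Set.mem_Iic, Set.mem_Ioc]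
            constructor
            · rintro ⟨h1', h2', _⟩; exact ⟨h2', h1'⟩
            · rintro ⟨h1', h2'⟩; exact ⟨h2', h1', h2'.trans hr.2⟩
          rw [hμ, MeasureTheory.integral_indicator measurableSet_Iic,
            Measure.restrict_restrict measurableSet_Iic, hset]
      _ = ∫ σ, H r σ ∂μ := by
          rw [hμ]
          exact setIntegral_congr_fun measurableSet_Ioc fun σ _ => (h1 σ).symm
  -- apply Fubini
  have hswap : (∫ r, (∫ σ, H r σ ∂μ) ∂μ) = ∫ σ, (∫ r, H r σ ∂μ) ∂μ :=
    integral_integral_swap hint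
  -- right side
  have hright : ∀ σ ∈ Ioc t T, (∫ r, H r σ ∂μ) = ∫ r in σ..T, f r σ := by
    intro σ hσ
    have h1 : ∀ r : ℝ, H r σ = (Ici σ).indicator (fun r => f r σ) r := fun r => by
      simp [hH, Set.indicator_apply, Set.mem_Ici]
    calc (∫ r, H r σ ∂μ) = ∫ r, (Ici σ).indicator (fun r => f r σ) r ∂μ := by
          exact integral_congr_ae (ae_of_all _ h1)
      _ = ∫ r in Ici σ ∩ Ioc t T, f r σ := by
          rw [hμ, MeasureTheory.integral_indicator measurableSet_Ici, Measure.restrict_restrict measurableSet_Ici]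
      _ = ∫ r in Icc σ T, f r σ := by
          have hset : Ici σ ∩ Ioc t T = Icc σ T := by
            ext r
            simp only [Set.mem_inter_iff, Set.mem_Ici, Set.mem_Ioc, Set.mem_Icc]
            constructor
            · rintro ⟨h1, _, h3⟩; exact ⟨h1, h3⟩
            · rintro ⟨h1, h2⟩; exact ⟨h1, hσ.1.trans_le h1, h2⟩
          rw [hset]
      _ = ∫ r in Ioc σ T, f r σ := integral_Icc_eq_integral_Ioc
      _ = ∫ r in σ..T, f r σ := (intervalIntegral.integral_of_le hσ.2).symm
  constructor
  · rw [hleft, hswap, intervalIntegral.integral_of_le htT]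
    exact setIntegral_congr_fun measurableSet_Ioc hright
  · have h2 : Integrable (fun σ => ∫ r, (uncurry H) (r, σ) ∂μ) μ := hint.integral_prod_right
    refine (h2.congr ?_)
    rw [hμ]
    refine (ae_restrict_iff' measurableSet_Ioc).2 (ae_of_all _ fun σ hσ => ?_)
    exact (hright σ hσ)


set_option maxHeartbeats 1000000 in
/-- `P` solves the backward Riccati integral equation iff
`P(t) = U⃗_{t,T} G Ψ⃖_{T,t} + ∫_t^T U⃗_{t,r} C(r) Ψ⃖_{r,t} dr`. -/
theorem riccati_solution_representation_one
    {X₁ X₂ : Type*}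
    [NormedAddCommGroup X₁] [NormedSpace ℝ X₁] [CompleteSpace X₁]
    [NormedAddCommGroup X₂] [NormedSpace ℝ X₂] [CompleteSpace X₂]
    (T : ℝ) (hT : 0 ≤ T)
    -- forward evolution family in L(X₁): strongly continuous, uniformly bounded
    (Ul : ℝ → ℝ → X₁ →L[ℝ] X₁)
    (hUlid : ∀ s ∈ Set.Icc 0 T, Ul s s = ContinuousLinearMap.id ℝ X₁)
    (hUlcomp : ∀ s r t : ℝ, 0 ≤ s → s ≤ r → r ≤ t → t ≤ T →
      Ul t s = (Ul t r).comp (Ul r s))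
    (MUl : ℝ) (hUlbdd : ∀ s t : ℝ, 0 ≤ s → s ≤ t → t ≤ T → ‖Ul t s‖ ≤ MUl)
    (hUlsc₁ : ∀ x : X₁, ∀ s ∈ Set.Icc 0 T, ContinuousOn (fun t => Ul t s x) (Set.Icc s T))
    (hUlsc₂ : ∀ x : X₁, ∀ t ∈ Set.Icc 0 T, ContinuousOn (fun s => Ul t s x) (Set.Icc 0 t))
    -- backward evolution family in L(X₂): strongly continuous, uniformly bounded
    (Ub : ℝ → ℝ → X₂ →L[ℝ] X₂)
    (hUbid : ∀ s ∈ Set.Icc 0 T, Ub s s = ContinuousLinearMap.id ℝ X₂)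
    (hUbcomp : ∀ t r s : ℝ, 0 ≤ t → t ≤ r → r ≤ s → s ≤ T →
      Ub t s = (Ub t r).comp (Ub r s))
    (MUb : ℝ) (hUbbdd : ∀ t s : ℝ, 0 ≤ t → t ≤ s → s ≤ T → ‖Ub t s‖ ≤ MUb)
    (hUbsc₁ : ∀ y : X₂, ∀ s ∈ Set.Icc 0 T, ContinuousOn (fun t => Ub t s y) (Set.Icc 0 s))
    (hUbsc₂ : ∀ y : X₂, ∀ t ∈ Set.Icc 0 T, ContinuousOn (fun s => Ub t s y) (Set.Icc t T))
    -- strongly continuous coefficients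
    (C : ℝ → X₁ →L[ℝ] X₂)
    (hCsc : ∀ x : X₁, ContinuousOn (fun t => C t x) (Set.Icc 0 T))
    (B : ℝ → X₂ →L[ℝ] X₁)
    (hBsc : ∀ y : X₂, ContinuousOn (fun t => B t y) (Set.Icc 0 T))
    (G : X₁ →L[ℝ] X₂)
    -- a strongly continuous operator function P
    (P : ℝ → X₁ →L[ℝ] X₂)
    (hPsc : ∀ x : X₁, ContinuousOn (fun t => P t x) (Set.Icc 0 T))
    -- the forward evolution family Ψ⃖ perturbed by -B·P
    (Ψl : ℝ → ℝ → X₁ →L[ℝ] X₁)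
    (hΨlid : ∀ s ∈ Set.Icc 0 T, Ψl s s = ContinuousLinearMap.id ℝ X₁)
    (hΨlcomp : ∀ s r t : ℝ, 0 ≤ s → s ≤ r → r ≤ t → t ≤ T →
      Ψl t s = (Ψl t r).comp (Ψl r s))
    (MΨl : ℝ) (hΨlbdd : ∀ s t : ℝ, 0 ≤ s → s ≤ t → t ≤ T → ‖Ψl t s‖ ≤ MΨl)
    (hΨlsc₁ : ∀ x : X₁, ∀ s ∈ Set.Icc 0 T, ContinuousOn (fun t => Ψl t s x) (Set.Icc s T))
    (hΨlsc₂ : ∀ x : X₁, ∀ t ∈ Set.Icc 0 T, ContinuousOn (fun s => Ψl t s x) (Set.Icc 0 t))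
    (hΨleq : ∀ x : X₁, ∀ s t : ℝ, 0 ≤ s → s ≤ t → t ≤ T →
      Ψl t s x = Ul t s x - ∫ r in s..t, Ψl t r (B r (P r (Ul r s x))))
    :
    -- P solves the Riccati integral equation iff it has the representation
      (∀ t ∈ Set.Icc 0 T, ∀ x : X₁,
        P t x = Ub t T (G (Ul T t x)) +
          ∫ r in t..T, Ub t r (C r (Ul r t x) - P r (B r (P r (Ul r t x))))) ↔
      (∀ t ∈ Set.Icc 0 T, ∀ x : X₁,
        P t x = Ub t T (G (Ψl T t x)) + ∫ r in t..T, Ub t r (C r (Ψl r t x))) := by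
  classical
  obtain ⟨MP, hMP0, hMPb⟩ := aux_bs hPsc
  obtain ⟨MB, hMB0, hMBb⟩ := aux_bs hBsc
  obtain ⟨MC, hMC0, hMCb⟩ := aux_bs hCsc
  set MUl' := max MUl 0 with hMUl'
  set MUb' := max MUb 0 with hMUb'
  set MΨ' := max MΨl 0 with hMΨ'
  have hMUl'0 : (0:ℝ) ≤ MUl' := le_max_right _ _
  have hMUb'0 : (0:ℝ) ≤ MUb' := le_max_right _ _
  have hMΨ'0 : (0:ℝ) ≤ MΨ' := le_max_right _ _
  have hUlb : ∀ s t : ℝ, 0 ≤ s → s ≤ t → t ≤ T → ‖Ul t s‖ ≤ MUl' :=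
    fun s t h1 h2 h3 => (hUlbdd s t h1 h2 h3).trans (le_max_left _ _)
  have hUbb : ∀ t s : ℝ, 0 ≤ t → t ≤ s → s ≤ T → ‖Ub t s‖ ≤ MUb' :=
    fun t s h1 h2 h3 => (hUbbdd t s h1 h2 h3).trans (le_max_left _ _)
  have hΨb : ∀ s t : ℝ, 0 ≤ s → s ≤ t → t ≤ T → ‖Ψl t s‖ ≤ MΨ' :=
    fun s t h1 h2 h3 => (hΨlbdd s t h1 h2 h3).trans (le_max_left _ _)
  -- the function y (depending on base time t and vector x)
  set y : ℝ → X₁ → ℝ → X₁ := fun t x σ => B σ (P σ (Ul σ t x)) with hy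
  -- the candidate representation
  set Q : ℝ → X₁ → X₂ := fun s v =>
    Ub s T (G (Ψl T s v)) + ∫ r in s..T, Ub s r (C r (Ψl r s v)) with hQdef
  -- ## continuity facts
  -- y is continuous
  have hycont : ∀ t ∈ Set.Icc (0:ℝ) T, ∀ x : X₁,
      ContinuousOn (y t x) (Set.Icc t T) := by
    intro t ht x
    have hsub : Set.Icc t T ⊆ Set.Icc (0:ℝ) T := Set.Icc_subset_Icc ht.1 le_rfl
    have h1 : ContinuousOn (fun σ => Ul σ t x) (Set.Icc t T) := hUlsc₁ x t ht
    have h2 : ContinuousOn (fun σ => P σ (Ul σ t x)) (Set.Icc t T) :=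
      aux_strong_comp (M := MP) (fun σ hσ => hMPb σ (hsub hσ))
        (fun z => (hPsc z).mono hsub) h1
    exact aux_strong_comp (M := MB) (fun σ hσ => hMBb σ (hsub hσ))
      (fun z => (hBsc z).mono hsub) h2
  -- the integrand r ↦ Ub s r (C r (Ψl r s v)) is continuous on [s, T]
  have hIc : ∀ s ∈ Set.Icc (0:ℝ) T, ∀ v : X₁,
      ContinuousOn (fun r => Ub s r (C r (Ψl r s v))) (Set.Icc s T) := by
    intro s hs v
    have hsub : Set.Icc s T ⊆ Set.Icc (0:ℝ) T := Set.Icc_subset_Icc hs.1 le_rfl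
    have h1 : ContinuousOn (fun r => Ψl r s v) (Set.Icc s T) := hΨlsc₁ v s hs
    have h2 : ContinuousOn (fun r => C r (Ψl r s v)) (Set.Icc s T) :=
      aux_strong_comp (M := MC) (fun r hr => hMCb r (hsub hr))
        (fun z => (hCsc z).mono hsub) h1
    exact aux_strong_comp (M := MUb') (fun r hr => hUbb s r hs.1 hr.1 hr.2)
      (fun z => hUbsc₂ z s hs) h2
  -- same with Ul in place of Ψl
  have hIc' : ∀ s ∈ Set.Icc (0:ℝ) T, ∀ v : X₁,
      ContinuousOn (fun r => Ub s r (C r (Ul r s v))) (Set.Icc s T) := by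
    intro s hs v
    have hsub : Set.Icc s T ⊆ Set.Icc (0:ℝ) T := Set.Icc_subset_Icc hs.1 le_rfl
    have h1 : ContinuousOn (fun r => Ul r s v) (Set.Icc s T) := hUlsc₁ v s hs
    have h2 : ContinuousOn (fun r => C r (Ul r s v)) (Set.Icc s T) :=
      aux_strong_comp (M := MC) (fun r hr => hMCb r (hsub hr))
        (fun z => (hCsc z).mono hsub) h1
    exact aux_strong_comp (M := MUb') (fun r hr => hUbb s r hs.1 hr.1 hr.2)
      (fun z => hUbsc₂ z s hs) h2
  -- σ ↦ Ψl ρ σ (w σ) is continuous, for w continuous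
  have hΨw : ∀ t ∈ Set.Icc (0:ℝ) T, ∀ ρ ∈ Set.Icc t T, ∀ w : ℝ → X₁,
      ContinuousOn w (Set.Icc t T) →
      ContinuousOn (fun σ => Ψl ρ σ (w σ)) (Set.Icc t ρ) := by
    intro t ht ρ hρ w hw
    have hρ' : ρ ∈ Set.Icc (0:ℝ) T := ⟨ht.1.trans hρ.1, hρ.2⟩
    have hsub : Set.Icc t ρ ⊆ Set.Icc (0:ℝ) ρ := Set.Icc_subset_Icc ht.1 le_rfl
    exact aux_strong_comp (M := MΨ')
      (fun σ hσ => hΨb σ ρ (ht.1.trans hσ.1) hσ.2 hρ.2)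
      (fun z => (hΨlsc₂ z ρ hρ').mono hsub)
      (hw.mono (Set.Icc_subset_Icc le_rfl hρ.2))
  -- σ ↦ Ub t σ (P σ (w σ)) is continuous, for w continuous
  have hUPw : ∀ t ∈ Set.Icc (0:ℝ) T, ∀ w : ℝ → X₁,
      ContinuousOn w (Set.Icc t T) →
      ContinuousOn (fun σ => Ub t σ (P σ (w σ))) (Set.Icc t T) := by
    intro t ht w hw
    have hsub : Set.Icc t T ⊆ Set.Icc (0:ℝ) T := Set.Icc_subset_Icc ht.1 le_rfl
    have h2 : ContinuousOn (fun σ => P σ (w σ)) (Set.Icc t T) :=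
      aux_strong_comp (M := MP) (fun σ hσ => hMPb σ (hsub hσ))
        (fun z => (hPsc z).mono hsub) hw
    exact aux_strong_comp (M := MUb') (fun σ hσ => hUbb t σ ht.1 hσ.1 hσ.2)
      (fun z => hUbsc₂ z t ht) h2
  -- ## the key identity
  have key : ∀ t ∈ Set.Icc (0:ℝ) T, ∀ x : X₁,
      (Q t x = Ub t T (G (Ul T t x)) + (∫ r in t..T, Ub t r (C r (Ul r t x)))
        - ∫ σ in t..T, Ub t σ (Q σ (y t x σ)))
      ∧ IntervalIntegrable (fun σ => Ub t σ (Q σ (y t x σ))) volume t T := by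
    intro t ht x
    have ht0 : (0:ℝ) ≤ t := ht.1
    have htT : t ≤ T := ht.2
    have huIcc : Set.uIcc t T = Set.Icc t T := Set.uIcc_of_le htT
    have hyc : ContinuousOn (y t x) (Set.Icc t T) := hycont t ht x
    -- integrability for step 1
    have i1 : IntervalIntegrable (fun σ => Ψl T σ (y t x σ)) volume t T := by
      apply ContinuousOn.intervalIntegrable
      rw [huIcc]
      exact hΨw t ht T ⟨htT, le_rfl⟩ (y t x) hyc
    -- step 1
    have step1 : Ub t T (G (Ψl T t x)) = Ub t T (G (Ul T t x))
        - ∫ σ in t..T, Ub t T (G (Ψl T σ (y t x σ))) := by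
      have h0 := hΨleq x t T ht0 htT le_rfl
      have h1 := congrArg (fun z => ((Ub t T).comp G) z) h0
      simp only [ContinuousLinearMap.comp_apply, map_sub] at h1
      have h2 := ((Ub t T).comp G).intervalIntegral_comp_comm i1
      simp only [ContinuousLinearMap.comp_apply] at h2
      rw [h1, ← h2]
    -- step 2
    have step2 : ∀ r ∈ Set.Icc t T, Ub t r (C r (Ψl r t x)) = Ub t r (C r (Ul r t x))
        - ∫ σ in t..r, Ub t r (C r (Ψl r σ (y t x σ))) := by
      intro r hr
      have i2 : IntervalIntegrable (fun σ => Ψl r σ (y t x σ)) volume t r := by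
        apply ContinuousOn.intervalIntegrable
        rw [Set.uIcc_of_le hr.1]
        exact hΨw t ht r hr (y t x) hyc
      have h0 := hΨleq x t r ht0 hr.1 hr.2
      have h1 := congrArg (fun z => ((Ub t r).comp (C r)) z) h0
      simp only [ContinuousLinearMap.comp_apply, map_sub] at h1
      have h2 := ((Ub t r).comp (C r)).intervalIntegral_comp_comm i2
      simp only [ContinuousLinearMap.comp_apply] at h2
      rw [h1, ← h2]
    -- integrability of the two main integrands
    have i3f : IntervalIntegrable (fun r => Ub t r (C r (Ψl r t x))) volume t T := by
      apply ContinuousOn.intervalIntegrable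
      rw [huIcc]
      exact hIc t ht x
    have i3g : IntervalIntegrable (fun r => Ub t r (C r (Ul r t x))) volume t T := by
      apply ContinuousOn.intervalIntegrable
      rw [huIcc]
      exact hIc' t ht x
    have i3h : IntervalIntegrable
        (fun r => ∫ σ in t..r, Ub t r (C r (Ψl r σ (y t x σ)))) volume t T := by
      refine (i3g.sub i3f).congr ?_
      intro r hr
      have hr' : r ∈ Set.Icc t T := Set.Ioc_subset_Icc_self ((Set.uIoc_of_le htT) ▸ hr)
      have := step2 r hr'
      simp only [Pi.sub_apply]
      rw [eq_sub_iff_add_eq] at this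
      rw [← this]
      abel
    -- step 3
    have step3 : (∫ r in t..T, Ub t r (C r (Ψl r t x)))
        = (∫ r in t..T, Ub t r (C r (Ul r t x)))
          - ∫ r in t..T, ∫ σ in t..r, Ub t r (C r (Ψl r σ (y t x σ))) := by
      rw [← intervalIntegral.integral_sub i3g i3h]
      refine intervalIntegral.integral_congr ?_
      intro r hr
      rw [huIcc] at hr
      exact step2 r hr
    -- ## Fubini on the triangle, with a clamped integrand
    set cl : ℝ → ℝ := fun u => min (max u t) T with hcl
    have hclcont : Continuous cl := (continuous_id.max continuous_const).min continuous_const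
    have hclmem : ∀ u : ℝ, cl u ∈ Set.Icc t T := fun u =>
      ⟨le_min (le_max_right _ _) htT, min_le_right _ _⟩
    have hclid : ∀ u ∈ Set.Icc t T, cl u = u := by
      intro u hu
      simp only [hcl]
      rw [max_eq_left hu.1, min_eq_left hu.2]
    set ff : ℝ → ℝ → X₂ := fun r σ =>
      if cl σ ≤ cl r then Ub t (cl r) (C (cl r) (Ψl (cl r) (cl σ) (y t x (cl σ))))
      else Ub t (cl r) (C (cl r) (y t x (cl σ))) with hff
    have hagree : ∀ r σ : ℝ, t ≤ σ → σ ≤ r → r ≤ T →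
        ff r σ = Ub t r (C r (Ψl r σ (y t x σ))) := by
      intro r σ h1 h2 h3
      have hσe : cl σ = σ := hclid σ ⟨h1, h2.trans h3⟩
      have hre : cl r = r := hclid r ⟨h1.trans h2, h3⟩
      simp only [hff, hσe, hre, if_pos h2]
    obtain ⟨My, hMy⟩ := isCompact_Icc.exists_bound_of_continuousOn hyc
    have hMy0 : (0:ℝ) ≤ My := (norm_nonneg (y t x t)).trans (hMy t ⟨le_rfl, htT⟩)
    have hffb : ∀ r σ : ℝ, ‖ff r σ‖ ≤ MUb' * (MC * ((MΨ' + 1) * My)) := by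
      intro r σ
      have hrm := hclmem r
      have hσm := hclmem σ
      have hr0 : (0:ℝ) ≤ cl r := ht0.trans hrm.1
      have hσ0 : (0:ℝ) ≤ cl σ := ht0.trans hσm.1
      have hyb : ‖y t x (cl σ)‖ ≤ My := hMy _ hσm
      have hUbn : ‖Ub t (cl r)‖ ≤ MUb' := hUbb t (cl r) ht0 hrm.1 hrm.2
      have hCn : ‖C (cl r)‖ ≤ MC := hMCb (cl r) ⟨hr0, hrm.2⟩
      simp only [hff]
      split_ifs with h
      · have hΨn : ‖Ψl (cl r) (cl σ)‖ ≤ MΨ' := hΨb (cl σ) (cl r) hσ0 h hrm.2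
        calc ‖Ub t (cl r) (C (cl r) (Ψl (cl r) (cl σ) (y t x (cl σ))))‖
            ≤ MUb' * ‖C (cl r) (Ψl (cl r) (cl σ) (y t x (cl σ)))‖ :=
              (Ub t (cl r)).le_of_opNorm_le hUbn _
          _ ≤ MUb' * (MC * ‖Ψl (cl r) (cl σ) (y t x (cl σ))‖) := by
              gcongr
              exact (C (cl r)).le_of_opNorm_le hCn _
          _ ≤ MUb' * (MC * (MΨ' * ‖y t x (cl σ)‖)) := by
              gcongr
              exact (Ψl (cl r) (cl σ)).le_of_opNorm_le hΨn _
          _ ≤ MUb' * (MC * ((MΨ' + 1) * My)) := by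
              have h9 : MΨ' * ‖y t x (cl σ)‖ ≤ (MΨ' + 1) * My := by
                nlinarith [norm_nonneg (y t x (cl σ))]
              gcongr MUb' * (MC * ?_)
      · calc ‖Ub t (cl r) (C (cl r) (y t x (cl σ)))‖
            ≤ MUb' * ‖C (cl r) (y t x (cl σ))‖ := (Ub t (cl r)).le_of_opNorm_le hUbn _
          _ ≤ MUb' * (MC * ‖y t x (cl σ)‖) := by
              gcongr
              exact (C (cl r)).le_of_opNorm_le hCn _
          _ ≤ MUb' * (MC * ((MΨ' + 1) * My)) := by
              have h9 : ‖y t x (cl σ)‖ ≤ (MΨ' + 1) * My := by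
                nlinarith [norm_nonneg (y t x (cl σ))]
              gcongr MUb' * (MC * ?_)
    -- continuity in the first variable, for fixed second variable
    have hffcont1 : ∀ σ : ℝ, Continuous fun r => ff r σ := by
      intro σ
      have hσm := hclmem σ
      have hσ0 : (0:ℝ) ≤ cl σ := ht0.trans hσm.1
      have hA : ContinuousOn (fun R => Ub t R (C R (Ψl R (cl σ) (y t x (cl σ)))))
          (Set.Icc (cl σ) T) := by
        have h1 : ContinuousOn (fun R => Ψl R (cl σ) (y t x (cl σ))) (Set.Icc (cl σ) T) :=
          hΨlsc₁ _ (cl σ) ⟨hσ0, hσm.2⟩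
        have h2 : ContinuousOn (fun R => C R (Ψl R (cl σ) (y t x (cl σ)))) (Set.Icc (cl σ) T) :=
          aux_strong_comp (M := MC) (fun R hR => hMCb R ⟨hσ0.trans hR.1, hR.2⟩)
            (fun z => (hCsc z).mono (Set.Icc_subset_Icc hσ0 le_rfl)) h1
        exact aux_strong_comp (M := MUb') (fun R hR => hUbb t R ht0 (hσm.1.trans hR.1) hR.2)
          (fun z => (hUbsc₂ z t ⟨ht0, htT⟩).mono (Set.Icc_subset_Icc hσm.1 le_rfl)) h2
      have hB : ContinuousOn (fun R => Ub t R (C R (y t x (cl σ)))) (Set.Icc t T) := by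
        have h2 : ContinuousOn (fun R => C R (y t x (cl σ))) (Set.Icc t T) :=
          (hCsc _).mono (Set.Icc_subset_Icc ht0 le_rfl)
        exact aux_strong_comp (M := MUb') (fun R hR => hUbb t R ht0 hR.1 hR.2)
          (fun z => hUbsc₂ z t ⟨ht0, htT⟩) h2
      simp only [hff]
      refine continuous_if_le continuous_const hclcont ?_ ?_ ?_
      · exact hA.comp hclcont.continuousOn fun r hr => ⟨hr, (hclmem r).2⟩
      · exact hB.comp hclcont.continuousOn fun r _ => hclmem r
      · intro r e
        rw [← e, hΨlid (cl σ) ⟨hσ0, hσm.2⟩]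
        rfl
    -- continuity in the second variable, for fixed first variable
    have hffcont2 : ∀ r : ℝ, Continuous (ff r) := by
      intro r
      have hrm := hclmem r
      have hr0 : (0:ℝ) ≤ cl r := ht0.trans hrm.1
      have hA : ContinuousOn (fun s => Ub t (cl r) (C (cl r) (Ψl (cl r) s (y t x s))))
          (Set.Icc t (cl r)) := by
        have h1 : ContinuousOn (fun s => Ψl (cl r) s (y t x s)) (Set.Icc t (cl r)) :=
          hΨw t ht (cl r) hrm (y t x) hyc
        exact ((Ub t (cl r)).continuous.comp (C (cl r)).continuous).comp_continuousOn h1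
      have hB : ContinuousOn (fun s => Ub t (cl r) (C (cl r) (y t x s))) (Set.Icc t T) :=
        ((Ub t (cl r)).continuous.comp (C (cl r)).continuous).comp_continuousOn hyc
      simp only [hff]
      refine continuous_if_le hclcont continuous_const ?_ ?_ ?_
      · exact hA.comp hclcont.continuousOn fun σ hσ => ⟨(hclmem σ).1, hσ⟩
      · exact hB.comp hclcont.continuousOn fun σ _ => hclmem σ
      · intro σ e
        rw [e, hΨlid (cl r) ⟨hr0, hrm.2⟩]
        rfl
    obtain ⟨hswapEq, hswapInt⟩ := aux_triangle_swap (Mf := MUb' * (MC * ((MΨ' + 1) * My)))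
      htT hffcont1 (fun r => (hffcont2 r).stronglyMeasurable) hffb
    -- step 4 : swap the order of integration
    have step4a : (∫ r in t..T, ∫ σ in t..r, Ub t r (C r (Ψl r σ (y t x σ))))
        = ∫ r in t..T, ∫ σ in t..r, ff r σ := by
      refine intervalIntegral.integral_congr fun r hr => ?_
      rw [huIcc] at hr
      refine intervalIntegral.integral_congr fun σ hσ => ?_
      rw [Set.uIcc_of_le hr.1] at hσ
      exact (hagree r σ hσ.1 hσ.2 hr.2).symm
    have step4b : (∫ σ in t..T, ∫ r in σ..T, ff r σ)
        = ∫ σ in t..T, ∫ r in σ..T, Ub t r (C r (Ψl r σ (y t x σ))) := by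
      refine intervalIntegral.integral_congr fun σ hσ => ?_
      rw [huIcc] at hσ
      refine intervalIntegral.integral_congr fun r hr => ?_
      rw [Set.uIcc_of_le hσ.2] at hr
      exact hagree r σ hσ.1 hr.1 hr.2
    have step4 : (∫ r in t..T, ∫ σ in t..r, Ub t r (C r (Ψl r σ (y t x σ))))
        = ∫ σ in t..T, ∫ r in σ..T, Ub t r (C r (Ψl r σ (y t x σ))) :=
      (step4a.trans hswapEq).trans step4b
    -- integrability of the iterated integral
    have i4 : IntervalIntegrable
        (fun σ => ∫ r in σ..T, Ub t r (C r (Ψl r σ (y t x σ)))) volume t T := by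
      rw [intervalIntegrable_iff, Set.uIoc_of_le htT]
      refine hswapInt.congr ?_
      refine (MeasureTheory.ae_restrict_iff' measurableSet_Ioc).2 (MeasureTheory.ae_of_all _ ?_)
      intro σ hσ
      refine intervalIntegral.integral_congr fun r hr => ?_
      rw [Set.uIcc_of_le hσ.2] at hr
      exact hagree r σ hσ.1.le hr.1 hr.2
    have i5a : IntervalIntegrable (fun σ => Ub t T (G (Ψl T σ (y t x σ)))) volume t T := by
      apply ContinuousOn.intervalIntegrable
      rw [huIcc]
      exact ((Ub t T).continuous.comp G.continuous).comp_continuousOn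
        (hΨw t ht T ⟨htT, le_rfl⟩ (y t x) hyc)
    -- step 5 : identify the inner integral with `Ub t σ (Q σ ⬝)`
    have step5 : ∀ σ ∈ Set.Icc t T,
        Ub t T (G (Ψl T σ (y t x σ))) + (∫ r in σ..T, Ub t r (C r (Ψl r σ (y t x σ))))
          = Ub t σ (Q σ (y t x σ)) := by
      intro σ hσ
      have hσ0 : (0:ℝ) ≤ σ := ht0.trans hσ.1
      have hσ' : σ ∈ Set.Icc (0:ℝ) T := ⟨hσ0, hσ.2⟩
      have iQ : IntervalIntegrable (fun r => Ub σ r (C r (Ψl r σ (y t x σ)))) volume σ T := by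
        apply ContinuousOn.intervalIntegrable
        rw [Set.uIcc_of_le hσ.2]
        exact hIc σ hσ' (y t x σ)
      have hQv : Q σ (y t x σ) = Ub σ T (G (Ψl T σ (y t x σ)))
          + ∫ r in σ..T, Ub σ r (C r (Ψl r σ (y t x σ))) := rfl
      rw [hQv, map_add]
      have e1 : Ub t σ (Ub σ T (G (Ψl T σ (y t x σ)))) = Ub t T (G (Ψl T σ (y t x σ))) := by
        rw [hUbcomp t σ T ht0 hσ.1 hσ.2 le_rfl]
        rfl
      have e2 : Ub t σ (∫ r in σ..T, Ub σ r (C r (Ψl r σ (y t x σ))))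
          = ∫ r in σ..T, Ub t r (C r (Ψl r σ (y t x σ))) := by
        rw [← (Ub t σ).intervalIntegral_comp_comm iQ]
        refine intervalIntegral.integral_congr fun r hr => ?_
        rw [Set.uIcc_of_le hσ.2] at hr
        rw [hUbcomp t σ r ht0 hσ.1 hr.1 hr.2]
        rfl
      rw [e1, e2]
    -- step 6 : combine the two σ-integrals
    have step6 : (∫ σ in t..T, Ub t T (G (Ψl T σ (y t x σ))))
        + (∫ σ in t..T, ∫ r in σ..T, Ub t r (C r (Ψl r σ (y t x σ))))
          = ∫ σ in t..T, Ub t σ (Q σ (y t x σ)) := by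
      rw [← intervalIntegral.integral_add i5a i4]
      refine intervalIntegral.integral_congr fun σ hσ => ?_
      rw [huIcc] at hσ
      exact step5 σ hσ
    have i6 : IntervalIntegrable (fun σ => Ub t σ (Q σ (y t x σ))) volume t T := by
      refine (i5a.add i4).congr ?_
      intro σ hσ
      have hσ' : σ ∈ Set.Icc t T := Set.Ioc_subset_Icc_self ((Set.uIoc_of_le htT) ▸ hσ)
      exact step5 σ hσ'
    refine ⟨?_, i6⟩
    have hQtx : Q t x = Ub t T (G (Ψl T t x)) + ∫ r in t..T, Ub t r (C r (Ψl r t x)) := rfl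
    rw [hQtx, step1, step3, step4, ← step6]
    abel
  -- ## integrability facts used by both directions
  have iG : ∀ t ∈ Set.Icc (0:ℝ) T, ∀ x : X₁,
      IntervalIntegrable (fun r => Ub t r (C r (Ul r t x))) volume t T := by
    intro t ht x
    apply ContinuousOn.intervalIntegrable
    rw [Set.uIcc_of_le ht.2]
    exact hIc' t ht x
  have iP : ∀ t ∈ Set.Icc (0:ℝ) T, ∀ x : X₁,
      IntervalIntegrable (fun σ => Ub t σ (P σ (y t x σ))) volume t T := by
    intro t ht x
    apply ContinuousOn.intervalIntegrable
    rw [Set.uIcc_of_le ht.2]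
    exact hUPw t ht (y t x) (hycont t ht x)
  constructor
  · -- ### forward direction: Riccati ⇒ representation
    intro hric
    -- the Volterra identity for the difference
    have volterra : ∀ t ∈ Set.Icc (0:ℝ) T, ∀ x : X₁,
        Q t x - P t x = -∫ σ in t..T, (Ub t σ (Q σ (y t x σ)) - Ub t σ (P σ (y t x σ))) := by
      intro t ht x
      have hP' : P t x = Ub t T (G (Ul T t x)) + ((∫ r in t..T, Ub t r (C r (Ul r t x)))
          - ∫ σ in t..T, Ub t σ (P σ (y t x σ))) := by
        rw [← intervalIntegral.integral_sub (iG t ht x) (iP t ht x)]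
        rw [hric t ht x]
        congr 1
        refine intervalIntegral.integral_congr fun r hr => ?_
        rw [map_sub]
      have hQ' := (key t ht x).1
      rw [intervalIntegral.integral_sub (key t ht x).2 (iP t ht x)]
      rw [hQ', hP']
      abel
    -- Gronwall-type iteration
    obtain ⟨K, hK⟩ : ∃ K : ℝ, K = MB * (MP * MUl') := ⟨_, rfl⟩
    have hK0 : 0 ≤ K := by rw [hK]; positivity
    obtain ⟨c₂, hc₂⟩ : ∃ c : ℝ, c = MUb' * K := ⟨_, rfl⟩
    have hc₂0 : 0 ≤ c₂ := by rw [hc₂]; positivity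
    obtain ⟨c₁, hc₁⟩ : ∃ c : ℝ, c = MUb' * (‖G‖ * MΨ') + T * (MUb' * (MC * MΨ')) + MP :=
      ⟨_, rfl⟩
    have hc₁0 : 0 ≤ c₁ := by rw [hc₁]; positivity
    have hyb : ∀ s ∈ Set.Icc (0:ℝ) T, ∀ v : X₁, ∀ σ ∈ Set.Icc s T,
        ‖y s v σ‖ ≤ K * ‖v‖ := by
      intro s hs v σ hσ
      have hσ' : σ ∈ Set.Icc (0:ℝ) T := ⟨hs.1.trans hσ.1, hσ.2⟩
      calc ‖y s v σ‖ = ‖B σ (P σ (Ul σ s v))‖ := rfl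
        _ ≤ MB * ‖P σ (Ul σ s v)‖ := (B σ).le_of_opNorm_le (hMBb σ hσ') _
        _ ≤ MB * (MP * ‖Ul σ s v‖) := by
            gcongr
            exact (P σ).le_of_opNorm_le (hMPb σ hσ') _
        _ ≤ MB * (MP * (MUl' * ‖v‖)) := by
            gcongr
            exact (Ul σ s).le_of_opNorm_le (hUlb s σ hs.1 hσ.1 hσ.2) _
        _ = K * ‖v‖ := by rw [hK]; ring
    have claim : ∀ n : ℕ, ∀ s ∈ Set.Icc (0:ℝ) T, ∀ v : X₁,
        ‖Q s v - P s v‖ ≤ c₁ * ‖v‖ * (c₂ * (T - s)) ^ n / n.factorial := by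
      intro n
      induction n with
      | zero =>
        intro s hs v
        simp only [pow_zero, Nat.factorial_zero, Nat.cast_one, mul_one, div_one]
        have hQb : ‖Q s v‖ ≤ MUb' * (‖G‖ * (MΨ' * ‖v‖))
            + T * (MUb' * (MC * (MΨ' * ‖v‖))) := by
          have h1 : ‖Ub s T (G (Ψl T s v))‖ ≤ MUb' * (‖G‖ * (MΨ' * ‖v‖)) := by
            calc ‖Ub s T (G (Ψl T s v))‖ ≤ MUb' * ‖G (Ψl T s v)‖ :=
                  (Ub s T).le_of_opNorm_le (hUbb s T hs.1 hs.2 le_rfl) _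
              _ ≤ MUb' * (‖G‖ * ‖Ψl T s v‖) := by
                  gcongr
                  exact G.le_opNorm _
              _ ≤ MUb' * (‖G‖ * (MΨ' * ‖v‖)) := by
                  gcongr
                  exact (Ψl T s).le_of_opNorm_le (hΨb s T hs.1 hs.2 le_rfl) _
          have h2 : ‖∫ r in s..T, Ub s r (C r (Ψl r s v))‖
              ≤ T * (MUb' * (MC * (MΨ' * ‖v‖))) := by
            have h3 : ∀ r ∈ Set.uIoc s T, ‖Ub s r (C r (Ψl r s v))‖
                ≤ MUb' * (MC * (MΨ' * ‖v‖)) := by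
              intro r hr
              rw [Set.uIoc_of_le hs.2] at hr
              have hr' : r ∈ Set.Icc (0:ℝ) T := ⟨hs.1.trans hr.1.le, hr.2⟩
              calc ‖Ub s r (C r (Ψl r s v))‖ ≤ MUb' * ‖C r (Ψl r s v)‖ :=
                    (Ub s r).le_of_opNorm_le (hUbb s r hs.1 hr.1.le hr.2) _
                _ ≤ MUb' * (MC * ‖Ψl r s v‖) := by
                    gcongr
                    exact (C r).le_of_opNorm_le (hMCb r hr') _
                _ ≤ MUb' * (MC * (MΨ' * ‖v‖)) := by
                    gcongr
                    exact (Ψl r s).le_of_opNorm_le (hΨb s r hs.1 hr.1.le hr.2) _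
            calc ‖∫ r in s..T, Ub s r (C r (Ψl r s v))‖
                ≤ MUb' * (MC * (MΨ' * ‖v‖)) * |T - s| :=
                  intervalIntegral.norm_integral_le_of_norm_le_const h3
              _ ≤ T * (MUb' * (MC * (MΨ' * ‖v‖))) := by
                  rw [abs_of_nonneg (by linarith [hs.2] : (0:ℝ) ≤ T - s)]
                  have h4 : (0:ℝ) ≤ MUb' * (MC * (MΨ' * ‖v‖)) := by positivity
                  nlinarith [hs.1, hs.2]
          calc ‖Q s v‖ ≤ ‖Ub s T (G (Ψl T s v))‖ + ‖∫ r in s..T, Ub s r (C r (Ψl r s v))‖ :=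
                norm_add_le _ _
            _ ≤ MUb' * (‖G‖ * (MΨ' * ‖v‖)) + T * (MUb' * (MC * (MΨ' * ‖v‖))) := by
                exact add_le_add h1 h2
        have hPb : ‖P s v‖ ≤ MP * ‖v‖ := (P s).le_of_opNorm_le (hMPb s hs) _
        calc ‖Q s v - P s v‖ ≤ ‖Q s v‖ + ‖P s v‖ := norm_sub_le _ _
          _ ≤ c₁ * ‖v‖ := by
              rw [hc₁]
              nlinarith [norm_nonneg v]
      | succ n ih =>
        intro s hs v
        have hvol := volterra s hs v
        have hTs : (0:ℝ) ≤ T - s := by linarith [hs.2]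
        obtain ⟨D, hD⟩ : ∃ D : ℝ, D = MUb' * (c₁ * (K * ‖v‖)) * c₂ ^ n / n.factorial :=
          ⟨_, rfl⟩
        have hD0 : 0 ≤ D := by rw [hD]; positivity
        have hgint : IntervalIntegrable (fun σ => D * (T - σ) ^ n) volume s T := by
          exact (continuous_const.mul
            ((continuous_const.sub continuous_id).pow n)).intervalIntegrable _ _
        have hbound : ∀ᵐ σ ∂(volume.restrict (Set.uIoc s T)),
            ‖Ub s σ (Q σ (y s v σ)) - Ub s σ (P σ (y s v σ))‖ ≤ D * (T - σ) ^ n := by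
          refine (MeasureTheory.ae_restrict_iff' measurableSet_uIoc).2
            (MeasureTheory.ae_of_all _ ?_)
          intro σ hσ
          rw [Set.uIoc_of_le hs.2] at hσ
          have hσ' : σ ∈ Set.Icc (0:ℝ) T := ⟨hs.1.trans hσ.1.le, hσ.2⟩
          have e1 : Ub s σ (Q σ (y s v σ)) - Ub s σ (P σ (y s v σ))
              = Ub s σ (Q σ (y s v σ) - P σ (y s v σ)) := by rw [map_sub]
          rw [e1]
          have h5 := ih σ hσ' (y s v σ)
          calc ‖Ub s σ (Q σ (y s v σ) - P σ (y s v σ))‖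
              ≤ MUb' * ‖Q σ (y s v σ) - P σ (y s v σ)‖ :=
                (Ub s σ).le_of_opNorm_le (hUbb s σ hs.1 hσ.1.le hσ.2) _
            _ ≤ MUb' * (c₁ * ‖y s v σ‖ * (c₂ * (T - σ)) ^ n / n.factorial) := by gcongr
            _ ≤ D * (T - σ) ^ n := by
                have h6 : ‖y s v σ‖ ≤ K * ‖v‖ := hyb s hs v σ ⟨hσ.1.le, hσ.2⟩
                have h7 : (0:ℝ) ≤ T - σ := by linarith [hσ.2]
                have e7 : MUb' * (c₁ * ‖y s v σ‖ * (c₂ * (T - σ)) ^ n / n.factorial)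
                    = MUb' * (c₁ * ‖y s v σ‖) * c₂ ^ n / n.factorial * (T - σ) ^ n := by
                  rw [mul_pow]; ring
                rw [e7, hD]
                refine mul_le_mul_of_nonneg_right ?_ (pow_nonneg h7 n)
                gcongr
        -- use the Volterra identity and integrate the bound
        rw [hvol, norm_neg]
        calc ‖∫ σ in s..T, (Ub s σ (Q σ (y s v σ)) - Ub s σ (P σ (y s v σ)))‖
            ≤ |∫ σ in s..T, D * (T - σ) ^ n| :=
              intervalIntegral.norm_integral_le_abs_of_norm_le hbound hgint
          _ = c₁ * ‖v‖ * (c₂ * (T - s)) ^ (n + 1) / (n + 1).factorial := by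
              rw [intervalIntegral.integral_const_mul]
              have e8 : (∫ σ in s..T, (T - σ) ^ n) = (T - s) ^ (n + 1) / (n + 1) := by
                have e9 := intervalIntegral.integral_comp_sub_left (a := s) (b := T)
                  (fun u => u ^ n) T
                rw [e9, sub_self, integral_pow]
                norm_num
              have habs : (0:ℝ) ≤ D * ((T - s) ^ (n + 1) / (n + 1)) := by
                have hTs' : (0:ℝ) ≤ (T - s) ^ (n + 1) := pow_nonneg hTs _
                positivity
              rw [e8, abs_of_nonneg habs]
              have e10 : c₂ ^ (n + 1) = MUb' * K * c₂ ^ n := by rw [pow_succ, hc₂]; ring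
              have e11 : ((n + 1).factorial : ℝ) = (n + 1) * n.factorial := by
                rw [Nat.factorial_succ]; push_cast; ring
              rw [mul_pow, e10, e11, hD]
              have hfn : ((n.factorial : ℝ)) ≠ 0 := by positivity
              have hfn1 : ((n : ℝ) + 1) ≠ 0 := by positivity
              field_simp
    -- pass to the limit
    intro t ht x
    have hlim : Filter.Tendsto (fun n : ℕ => c₁ * ‖x‖ * (c₂ * (T - t)) ^ n / n.factorial)
        Filter.atTop (nhds 0) := by
      have h0 := FloorSemiring.tendsto_pow_div_factorial_atTop (K := ℝ) (c₂ * (T - t))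
      have h1 := h0.const_mul (c₁ * ‖x‖)
      simpa [mul_div_assoc] using h1
    have hle : ‖Q t x - P t x‖ ≤ 0 :=
      ge_of_tendsto' hlim fun n => claim n t ht x
    have h2 : Q t x = P t x := sub_eq_zero.1 (norm_le_zero_iff.1 hle)
    exact h2.symm
  · -- ### converse direction: representation ⇒ Riccati
    intro hrep t ht x
    have hPQ : ∀ s ∈ Set.Icc (0:ℝ) T, ∀ v : X₁, P s v = Q s v := fun s hs v => hrep s hs v
    have hk := (key t ht x).1
    have h1 : (∫ σ in t..T, Ub t σ (Q σ (y t x σ))) = ∫ σ in t..T, Ub t σ (P σ (y t x σ)) := by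
      refine intervalIntegral.integral_congr fun σ hσ => ?_
      rw [Set.uIcc_of_le ht.2] at hσ
      rw [hPQ σ ⟨ht.1.trans hσ.1, hσ.2⟩ (y t x σ)]
    rw [hPQ t ht x, hk, h1, add_sub_assoc,
      ← intervalIntegral.integral_sub (iG t ht x) (iP t ht x)]
    congr 1
    refine intervalIntegral.integral_congr fun r hr => ?_
    exact (map_sub (Ub t r) _ _).symm
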